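/- For q ≥ 3, the simplicial complex 𝕃²_q is a quasi-tree: its facets can be ordered F_0, F_1, ..., F_q so that each F_k (k ≥ 1) is a leaf of the complex generated by F_0, ..., F_k, with joint F_0. -/

import Mathlib

/-- The big facet `F₀` of `𝕃²_q`: all non-diagonal unordered pairs `{i,j}`, `i < j`. -/
def L2F0 (q : ℕ) : Finset (Sym2 (Fin q)) :=
  Finset.univ.filter (fun e => ¬ e.IsDiag)

/-- The facet `F_k` of `𝕃²_q`: all pairs `{k, j}` with `j ∈ {1,...,q}`. -/
def L2F (q : ℕ) (k : Fin q) : Finset (Sym2 (Fin q)) :=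
  Finset.univ.image (fun j : Fin q => s(k, j))

/-- Faces of `𝕃²_q`: subsets of `F₀` or of some `F_k`. -/
def L2IsFace (q : ℕ) (σ : Finset (Sym2 (Fin q))) : Prop :=
  σ ⊆ L2F0 q ∨ ∃ k : Fin q, σ ⊆ L2F q k

/-- Facets of `𝕃²_q`: maximal faces. -/
def L2IsFacet (q : ℕ) (σ : Finset (Sym2 (Fin q))) : Prop :=
  L2IsFace q σ ∧ ∀ τ : Finset (Sym2 (Fin q)), L2IsFace q τ → σ ⊆ τ → σ = τ

lemma mem_L2F {q : ℕ} {k : Fin q} {e : Sym2 (Fin q)} :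
    e ∈ L2F q k ↔ ∃ j, s(k, j) = e := by simp [L2F]

lemma mem_L2F0 {q : ℕ} {e : Sym2 (Fin q)} : e ∈ L2F0 q ↔ ¬ e.IsDiag := by simp [L2F0]

lemma exists_ne_ne (q : ℕ) (hq : 3 ≤ q) (k m : Fin q) : ∃ j : Fin q, j ≠ k ∧ j ≠ m := by
  have h : (({k, m} : Finset (Fin q))ᶜ).Nonempty := by
    rw [← Finset.card_pos, Finset.card_compl, Fintype.card_fin]
    have := Finset.card_insert_le k ({m} : Finset (Fin q))
    simp only [Finset.card_singleton] at this
    omega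
  obtain ⟨j, hj⟩ := h
  simp only [Finset.mem_compl, Finset.mem_insert, Finset.mem_singleton, not_or] at hj
  exact ⟨j, hj.1, hj.2⟩

lemma exists_two_ne (q : ℕ) (hq : 3 ≤ q) (k : Fin q) :
    ∃ a b : Fin q, a ≠ b ∧ a ≠ k ∧ b ≠ k := by
  have h : 1 < (Finset.univ.erase k).card := by
    rw [Finset.card_erase_of_mem (Finset.mem_univ k), Finset.card_univ, Fintype.card_fin]
    omega
  obtain ⟨a, ha, b, hb, hab⟩ := Finset.one_lt_card.mp h
  exact ⟨a, b, hab, Finset.ne_of_mem_erase ha, Finset.ne_of_mem_erase hb⟩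

lemma not_F0_subset_Fk {q : ℕ} (hq : 3 ≤ q) (k : Fin q) : ¬ L2F0 q ⊆ L2F q k := by
  obtain ⟨a, b, hab, hak, hbk⟩ := exists_two_ne q hq k
  intro h
  have h1 : s(a, b) ∈ L2F0 q := mem_L2F0.mpr (by simp [hab])
  obtain ⟨j, hj⟩ := mem_L2F.mp (h h1)
  rw [Sym2.eq_iff] at hj
  rcases hj with ⟨h2, _⟩ | ⟨h2, _⟩
  · exact hak h2.symm
  · exact hbk h2.symm

lemma not_Fk_subset_F0 {q : ℕ} (k : Fin q) : ¬ L2F q k ⊆ L2F0 q := by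
  intro h
  have h1 : s(k, k) ∈ L2F q k := mem_L2F.mpr ⟨k, rfl⟩
  have := mem_L2F0.mp (h h1)
  exact this (Sym2.isDiag_iff_proj_eq |>.mpr rfl)

lemma Fk_subset_Fm {q : ℕ} (hq : 3 ≤ q) {k m : Fin q} (h : L2F q k ⊆ L2F q m) : k = m := by
  by_contra hkm
  obtain ⟨j, hjk, hjm⟩ := exists_ne_ne q hq k m
  have h1 : s(k, j) ∈ L2F q k := mem_L2F.mpr ⟨j, rfl⟩
  obtain ⟨j', hj'⟩ := mem_L2F.mp (h h1)
  rw [Sym2.eq_iff] at hj'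
  rcases hj' with ⟨h2, _⟩ | ⟨h2, _⟩
  · exact hkm h2.symm
  · exact hjm h2.symm

/-- For `q ≥ 3`, `𝕃²_q` is a quasi-tree: with the facet order `F₀, F₁, ..., F_q`, each
`F_k` (`k ≥ 1`) is a leaf of the complex generated by `F₀, ..., F_k` with joint `F₀`,
i.e. `F_k ∩ H ⊆ F₀` for every earlier facet `H ≠ F_k`; moreover these are all the facets. -/
theorem L2_quasiTree (q : ℕ) (hq : 3 ≤ q) :
    (∀ σ : Finset (Sym2 (Fin q)), L2IsFacet q σ ↔ (σ = L2F0 q ∨ ∃ k : Fin q, σ = L2F q k)) ∧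
    (∀ k : Fin q, L2F q k ∩ L2F0 q ⊆ L2F0 q) ∧
    (∀ k m : Fin q, (m : ℕ) < (k : ℕ) → L2F q k ∩ L2F q m ⊆ L2F0 q) := by
  refine ⟨?_, fun k => Finset.inter_subset_right, ?_⟩
  · intro σ
    constructor
    · rintro ⟨hface, hmax⟩
      rcases hface with h | ⟨k, h⟩
      · exact Or.inl (hmax _ (Or.inl subset_rfl) h)
      · exact Or.inr ⟨k, hmax _ (Or.inr ⟨k, subset_rfl⟩) h⟩
    · rintro (rfl | ⟨k, rfl⟩)
      · refine ⟨Or.inl subset_rfl, ?_⟩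
        intro τ hτ hsub
        rcases hτ with h | ⟨m, h⟩
        · exact Finset.Subset.antisymm hsub h
        · exact absurd (hsub.trans h) (not_F0_subset_Fk hq m)
      · refine ⟨Or.inr ⟨k, subset_rfl⟩, ?_⟩
        intro τ hτ hsub
        rcases hτ with h | ⟨m, h⟩
        · exact absurd (hsub.trans h) (not_Fk_subset_F0 k)
        · have hk : k = m := Fk_subset_Fm hq (hsub.trans h)
          subst hk
          exact Finset.Subset.antisymm hsub h
  · intro k m hmk e he
    rw [Finset.mem_inter] at he
    obtain ⟨j1, h1⟩ := mem_L2F.mp he.1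
    obtain ⟨j2, h2⟩ := mem_L2F.mp he.2
    have hkm : k ≠ m := by
      intro h; subst h; omega
    have h3 : s(m, j2) = s(k, j1) := h2.trans h1.symm
    rw [Sym2.eq_iff] at h3
    rcases h3 with ⟨h4, _⟩ | ⟨h4, h5⟩
    · exact absurd h4.symm hkm
    · rw [mem_L2F0, ← h1]
      simp [Sym2.isDiag_iff_proj_eq]
      exact fun h => hkm (h.trans h4.symm)
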